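/- arXiv:1209.6570 — 6 statements merged into one kernel-verified Lean document; each statement's English description precedes it below -/
import Mathlib

section
/- The function $a(t) = 7 + 2t - 6\sqrt{5+4t} \cos\left(\frac{1}{3}\arccos\left(\frac{11+14t+2t^2}{(5+4t)^{3/2}}\right) + \frac{\pi}{3}\right)$ satisfies the cubic equation $(a(t) + 2 - 2t)^3 - 27 a(t)^2 = 0$ for all $t \in [0,1)$. -/
theorem a_satisfies_cubic :
    ∀ t ∈ Set.Ico (0 : ℝ) 1,
      (7 + 2 * t - 6 * Real.sqrt (5 + 4 * t) *
          Real.cos (1 / 3 * Real.arccos ((11 + 14 * t + 2 * t ^ 2) /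
            (5 + 4 * t) ^ ((3 : ℝ) / 2)) + Real.pi / 3) + 2 - 2 * t) ^ 3 -
        27 * (7 + 2 * t - 6 * Real.sqrt (5 + 4 * t) *
          Real.cos (1 / 3 * Real.arccos ((11 + 14 * t + 2 * t ^ 2) /
            (5 + 4 * t) ^ ((3 : ℝ) / 2)) + Real.pi / 3)) ^ 2 = 0 := by
  intro t ht
  obtain ⟨h0, h1⟩ := ht
  have hs : (0:ℝ) < 5 + 4 * t := by linarith
  set u := Real.sqrt (5 + 4 * t) with hu
  have hu2 : u ^ 2 = 5 + 4 * t := Real.sq_sqrt hs.le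
  have hupos : 0 < u := Real.sqrt_pos.mpr hs
  have hu3 : 0 < u ^ 3 := by positivity
  have hrpow : (5 + 4 * t) ^ ((3 : ℝ) / 2) = u ^ 3 := by
    rw [show ((3:ℝ)/2) = (1/2) * 3 by ring, Real.rpow_mul hs.le, ← Real.sqrt_eq_rpow,
      show (3:ℝ) = ((3:ℕ):ℝ) by norm_num, Real.rpow_natCast]
  rw [hrpow]
  set X := (11 + 14 * t + 2 * t ^ 2) / u ^ 3 with hX
  have hN : (0:ℝ) ≤ 11 + 14 * t + 2 * t ^ 2 := by nlinarith
  have key : (u ^ 3) ^ 2 = (5 + 4 * t) ^ 3 := by rw [show (u^3)^2 = (u^2)^3 by ring, hu2]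
  have hle : 11 + 14 * t + 2 * t ^ 2 ≤ u ^ 3 := by
    have hfac : (0:ℝ) ≤ 4 * (1 - t) ^ 3 * (1 + t) := by
      have : (0:ℝ) ≤ (1 - t) ^ 3 := pow_nonneg (by linarith) 3
      nlinarith
    nlinarith [key, hN, hu3]
  have hX1 : X ≤ 1 := by rw [hX, div_le_one hu3]; exact hle
  have hXm1 : -1 ≤ X := by
    have : 0 ≤ X := div_nonneg hN hu3.le
    linarith
  have hXu : X * u ^ 3 = 11 + 14 * t + 2 * t ^ 2 := by
    rw [hX]; field_simp
  set c := Real.cos (1 / 3 * Real.arccos X + Real.pi / 3) with hc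
  have h3 : Real.cos (Real.arccos X + Real.pi) = -X := by
    rw [Real.cos_add_pi, Real.cos_arccos hXm1 hX1]
  have hthree := Real.cos_three_mul (1 / 3 * Real.arccos X + Real.pi / 3)
  rw [show 3 * (1 / 3 * Real.arccos X + Real.pi / 3) = Real.arccos X + Real.pi by ring,
    h3] at hthree
  have hc3 : 4 * c ^ 3 - 3 * c = -X := by rw [hc]; linarith [hthree]
  linear_combination (-162 * u * c) * hu2 + (-54 * u ^ 3) * hc3 + 54 * hXu
end

section
/- Let $a : [0,1) \to \mathbb{R}$ be a differentiable function with $a(0) = 1$, $0 < a(t) \le 1$, satisfying $a'(t) = -\frac{6a(t)}{4 - 4t - a(t)}$ (where $4-4t-a(t) > 0$) for all $t \in [0,1)$. Then $(a(t) + 2 - 2t)^3 = 27 a(t)^2$ for all $t \in [0,1)$. -/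
theorem ode_first_integral (a : ℝ → ℝ)
    (ha0 : a 0 = 1)
    (hpos : ∀ t ∈ Set.Ico (0 : ℝ) 1, 0 < a t ∧ a t ≤ 1)
    (hdenom : ∀ t ∈ Set.Ico (0 : ℝ) 1, 0 < 4 - 4 * t - a t)
    (hderiv : ∀ t ∈ Set.Ico (0 : ℝ) 1,
      HasDerivAt a (-(6 * a t) / (4 - 4 * t - a t)) t) :
    ∀ t ∈ Set.Ico (0 : ℝ) 1, (a t + 2 - 2 * t) ^ 3 = 27 * (a t) ^ 2 := by
  set R : ℝ → ℝ := fun t => (a t + 2 - 2 * t) ^ 3 / (a t) ^ 2 with hR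
  have hRderiv : ∀ t ∈ Set.Ico (0 : ℝ) 1, HasDerivAt R 0 t := by
    intro t ht
    have hat := (hpos t ht).1
    have hd := hdenom t ht
    have ha' := hderiv t ht
    have hu : HasDerivAt (fun t => (a t + 2 - 2 * t) ^ 3)
        (3 * (a t + 2 - 2 * t) ^ 2 * (-(6 * a t) / (4 - 4 * t - a t) - 2)) t := by
      have h1 : HasDerivAt (fun t => a t + 2 - 2 * t)
          (-(6 * a t) / (4 - 4 * t - a t) - 2) t := by
        have := (ha'.add_const 2).sub ((hasDerivAt_id t).const_mul 2)
        simpa [Pi.sub_def] using this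
      simpa [mul_comm, Pi.pow_def] using h1.pow 3
    have hv : HasDerivAt (fun t => (a t) ^ 2)
        (2 * a t * (-(6 * a t) / (4 - 4 * t - a t))) t := by
      simpa [mul_comm, mul_assoc, Pi.pow_def] using ha'.pow 2
    have hval := hu.div hv (by positivity)
    have : (3 * (a t + 2 - 2 * t) ^ 2 * (-(6 * a t) / (4 - 4 * t - a t) - 2) * (a t) ^ 2
        - (a t + 2 - 2 * t) ^ 3 * (2 * a t * (-(6 * a t) / (4 - 4 * t - a t))))
        / ((a t) ^ 2) ^ 2 = 0 := by
      rw [div_eq_zero_iff]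
      left
      have hd' : 4 - 4 * t - a t ≠ 0 := hd.ne'
      have key : (-(6 * a t) / (4 - 4 * t - a t)) * (4 - 4 * t - a t) = -(6 * a t) :=
        div_mul_cancel₀ _ hd'
      linear_combination (-(a t) * (a t + 2 - 2 * t) ^ 2) * key
    rw [this] at hval
    exact hval
  have hR0 : R 0 = 27 := by simp [hR, ha0]; norm_num
  intro t ht
  obtain ⟨ht0, ht1⟩ := ht
  have hsub : Set.Icc (0 : ℝ) t ⊆ Set.Ico (0 : ℝ) 1 := fun x hx =>
    ⟨hx.1, lt_of_le_of_lt hx.2 ht1⟩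
  have hcont : ContinuousOn R (Set.Icc 0 t) := fun x hx =>
    ((hRderiv x (hsub hx)).continuousAt).continuousWithinAt
  have hRt : R t = R 0 := by
    have := constant_of_has_deriv_right_zero hcont (fun x hx =>
      ((hRderiv x (hsub ⟨hx.1, hx.2.le⟩)).hasDerivWithinAt))
    exact this t (Set.right_mem_Icc.2 ht0)
  have hat := (hpos t ⟨ht0, ht1⟩).1
  have : (a t + 2 - 2 * t) ^ 3 / (a t) ^ 2 = 27 := by rw [← hR0]; exact hRt
  field_simp at this
  linarith [this]
end

section
/- Let $a(t)$ be the solution of the cubic $(a+2-2t)^3 = 27a^2$ given by $a(t) = 7+2t-6\sqrt{5+4t}\cos\left(\frac{1}{3}\arccos\left(\frac{11+14t+2t^2}{(5+4t)^{3/2}}\right)+\frac{\pi}{3}\right)$. Then $\lim_{t \to 1^-} \frac{a(t)}{(1-t)^{3/2}} = \left(\frac{2}{3}\right)^{3/2}$. -/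
open Filter Real

lemma rpow_three_halves {a : ℝ} (ha : 0 ≤ a) : a ^ ((3:ℝ)/2) = Real.sqrt (a^3) := by
  rw [show (3:ℝ)/2 = (3:ℝ)*(1/2) by ring, Real.rpow_mul ha, Real.sqrt_eq_rpow,
    show ((3:ℝ)) = ((3:ℕ):ℝ) by norm_num, Real.rpow_natCast]

lemma sin_div_self_tendsto :
    Tendsto (fun y : ℝ => Real.sin y / y) (nhdsWithin 0 {0}ᶜ) (nhds 1) := by
  have h := (Real.hasDerivAt_sin 0)
  rw [hasDerivAt_iff_tendsto_slope] at h
  simp only [Real.cos_zero] at h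
  refine h.congr (fun y => ?_)
  simp [slope_def_field]

lemma tendsto_within_of_continuousAt {f : ℝ → ℝ} (h : ContinuousAt f 1) :
    Tendsto f (nhdsWithin 1 (Set.Iio 1)) (nhds (f 1)) :=
  h.tendsto.mono_left nhdsWithin_le_nhds

lemma decomp (t θ : ℝ) (ht : t ∈ Set.Ioo (0:ℝ) 1) :
    (7 + 2*t - 6*Real.sqrt (5+4*t) * Real.cos (1/3 * θ + Real.pi/3)) / Real.sqrt ((1-t)^3)
  = 4*Real.sqrt (1-t)/(7+2*t+3*Real.sqrt (5+4*t))
  + 3*Real.sqrt (5+4*t)*(1 - Real.cos (θ/3))/Real.sqrt ((1-t)^3)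
  + 3*Real.sqrt 3*Real.sqrt (5+4*t)*Real.sin (θ/3)/Real.sqrt ((1-t)^3) := by
  obtain ⟨ht0, ht1⟩ := ht
  have h1t : (0:ℝ) < 1 - t := by linarith
  have hr0 : (0:ℝ) < Real.sqrt (5+4*t) := Real.sqrt_pos.2 (by linarith)
  have hr2 : Real.sqrt (5+4*t) ^ 2 = 5+4*t := Real.sq_sqrt (by linarith)
  have hS : (0:ℝ) < Real.sqrt ((1-t)^3) := Real.sqrt_pos.2 (by positivity)
  have hw : Real.sqrt ((1-t)^3) * Real.sqrt (1-t) = (1-t)^2 := by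
    rw [← Real.sqrt_mul (by positivity), show (1-t)^3*(1-t) = ((1-t)^2)^2 by ring,
      Real.sqrt_sq (by positivity)]
  have hD : (0:ℝ) < 7+2*t+3*Real.sqrt (5+4*t) := by linarith
  have hcos : Real.cos (1/3*θ + Real.pi/3)
      = Real.cos (θ/3)/2 - Real.sqrt 3 * Real.sin (θ/3)/2 := by
    rw [show 1/3*θ = θ/3 by ring, Real.cos_add, Real.cos_pi_div_three, Real.sin_pi_div_three]
    ring
  rw [hcos]
  field_simp
  have hr2' : Real.sqrt (5+t*4)^2 = 5+4*t := by rw [show (5:ℝ)+t*4 = 5+4*t by ring]; exact hr2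
  linear_combination (-18) * hr2' + (-8) * hw

lemma xid (t : ℝ) (ht : t ∈ Set.Ioo (0:ℝ) 1) :
    1 - (11 + 14*t + 2*t^2) / (5+4*t) ^ ((3:ℝ)/2)
      = 4*(1-t)^3*(1+t) /
        (Real.sqrt ((5+4*t)^3) * (Real.sqrt ((5+4*t)^3) + (11 + 14*t + 2*t^2))) := by
  obtain ⟨ht0, ht1⟩ := ht
  have h5 : (0:ℝ) < 5+4*t := by linarith
  have hp0 : (0:ℝ) < Real.sqrt ((5+4*t)^3) := Real.sqrt_pos.2 (by positivity)
  have hp2 : Real.sqrt ((5+4*t)^3) ^ 2 = (5+4*t)^3 := Real.sq_sqrt (by positivity)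
  have hq : (0:ℝ) < 11 + 14*t + 2*t^2 := by nlinarith
  rw [rpow_three_halves h5.le]
  have hpq : (0:ℝ) < Real.sqrt ((5+4*t)^3) + (11 + 14*t + 2*t^2) := by linarith
  field_simp
  have hp2' : Real.sqrt ((5+t*4)^3)^2 = (5+4*t)^3 := by rw [show (5:ℝ)+t*4 = 5+4*t by ring]; exact hp2
  linear_combination hp2'

lemma xlt1 (t : ℝ) (ht : t ∈ Set.Ioo (0:ℝ) 1) :
    (11 + 14*t + 2*t^2) / (5+4*t) ^ ((3:ℝ)/2) < 1 := by
  obtain ⟨ht0, ht1⟩ := ht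
  have hp0 : (0:ℝ) < Real.sqrt ((5+4*t)^3) := Real.sqrt_pos.2 (by positivity)
  have hq : (0:ℝ) < 11 + 14*t + 2*t^2 := by nlinarith
  have h := xid t ⟨ht0, ht1⟩
  have : (0:ℝ) < 4*(1-t)^3*(1+t) /
      (Real.sqrt ((5+4*t)^3) * (Real.sqrt ((5+4*t)^3) + (11 + 14*t + 2*t^2))) := by
    apply div_pos (by nlinarith [pow_pos (show (0:ℝ) < 1-t by linarith) 3]) (by positivity)
  rw [← h] at this
  linarith

lemma xpos (t : ℝ) (ht : t ∈ Set.Ioo (0:ℝ) 1) :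
    (0:ℝ) < (11 + 14*t + 2*t^2) / (5+4*t) ^ ((3:ℝ)/2) := by
  obtain ⟨ht0, ht1⟩ := ht
  have h5 : (0:ℝ) < 5+4*t := by linarith
  have : (0:ℝ) < (5+4*t) ^ ((3:ℝ)/2) := Real.rpow_pos_of_pos h5 _
  exact div_pos (by nlinarith) this

lemma sinhalf (t : ℝ) (ht : t ∈ Set.Ioo (0:ℝ) 1) :
    Real.sin (Real.arccos ((11 + 14*t + 2*t^2) / (5+4*t) ^ ((3:ℝ)/2)) / 2)
      = Real.sqrt (2*(1+t) /
          (Real.sqrt ((5+4*t)^3) * (Real.sqrt ((5+4*t)^3) + (11 + 14*t + 2*t^2))))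
        * Real.sqrt ((1-t)^3) := by
  obtain ⟨ht0, ht1⟩ := ht
  set x := (11 + 14*t + 2*t^2) / (5+4*t) ^ ((3:ℝ)/2) with hx
  have hxle : x ≤ 1 := (xlt1 t ⟨ht0, ht1⟩).le
  have hxge : (-1:ℝ) ≤ x := by linarith [xpos t ⟨ht0, ht1⟩]
  have hpi : (0:ℝ) < Real.pi := Real.pi_pos
  rw [Real.sin_half_eq_sqrt (Real.arccos_nonneg x) (by linarith [Real.arccos_le_pi x]),
    Real.cos_arccos hxge hxle]
  have h := xid t ⟨ht0, ht1⟩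
  rw [← hx] at h
  rw [show (1 - x)/2 = (2*(1+t) /
      (Real.sqrt ((5+4*t)^3) * (Real.sqrt ((5+4*t)^3) + (11 + 14*t + 2*t^2)))) * ((1-t)^3) by
        rw [h]; ring,
    Real.sqrt_mul (by positivity)]

theorem a_limit :
    Tendsto (fun t : ℝ =>
        (7 + 2 * t - 6 * Real.sqrt (5 + 4 * t) *
          Real.cos (1 / 3 * Real.arccos ((11 + 14 * t + 2 * t ^ 2) /
            (5 + 4 * t) ^ ((3 : ℝ) / 2)) + Real.pi / 3)) / (1 - t) ^ ((3 : ℝ) / 2))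
      (nhdsWithin 1 (Set.Iio 1)) (nhds (((2 : ℝ) / 3) ^ ((3 : ℝ) / 2))) := by
  have hmem : ∀ᶠ t in nhdsWithin (1:ℝ) (Set.Iio 1), t ∈ Set.Ioo (0:ℝ) 1 :=
    Ioo_mem_nhdsLT_of_mem ⟨zero_lt_one, le_refl 1⟩
  set l := nhdsWithin (1:ℝ) (Set.Iio 1) with hl
  set th : ℝ → ℝ := fun t =>
    Real.arccos ((11 + 14*t + 2*t^2) / (5+4*t) ^ ((3:ℝ)/2)) with hthdef
  -- basic tendstos
  have TX : Tendsto (fun t : ℝ => (11 + 14*t + 2*t^2) / (5+4*t) ^ ((3:ℝ)/2)) l (nhds 1) := by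
    have heq : (fun t : ℝ => (11 + 14*t + 2*t^2) / Real.sqrt ((5+4*t)^3)) =ᶠ[l]
        (fun t : ℝ => (11 + 14*t + 2*t^2) / (5+4*t) ^ ((3:ℝ)/2)) := by
      filter_upwards [hmem] with t ht
      rw [rpow_three_halves (by nlinarith [ht.1] : (0:ℝ) ≤ 5+4*t)]
    refine Tendsto.congr' heq ?_
    have hc : ContinuousAt (fun t : ℝ => (11 + 14*t + 2*t^2) / Real.sqrt ((5+4*t)^3)) 1 := by
      apply ContinuousAt.div (by fun_prop) (by fun_prop)
      rw [show ((5+4*(1:ℝ))^3) = 27^2 by norm_num, Real.sqrt_sq (by norm_num)]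
      norm_num
    have := tendsto_within_of_continuousAt hc
    convert this using 2
    rw [show ((5+4*(1:ℝ))^3) = 27^2 by norm_num, Real.sqrt_sq (by norm_num)]
    norm_num
  have Tth : Tendsto th l (nhds 0) := by
    have := (Real.continuous_arccos.tendsto 1).comp TX
    simpa [hthdef, Real.arccos_one, Function.comp_def] using this
  have hthpos : ∀ᶠ t in l, 0 < th t := by
    filter_upwards [hmem] with t ht
    exact Real.arccos_pos.2 (xlt1 t ht)
  have hthle : ∀ t, th t ≤ Real.pi := fun t => Real.arccos_le_pi _
  have hsinpos : ∀ᶠ t in l, 0 < Real.sin (th t / 2) := by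
    filter_upwards [hthpos] with t ht
    exact Real.sin_pos_of_pos_of_lt_pi (by linarith)
      (by linarith [hthle t, Real.pi_pos])
  have TS : Tendsto (fun t : ℝ => Real.sqrt ((1-t)^3)) l (nhds 0) := by
    have := tendsto_within_of_continuousAt (f := fun t : ℝ => Real.sqrt ((1-t)^3)) (by fun_prop)
    simpa using this
  have Tr : Tendsto (fun t : ℝ => Real.sqrt (5+4*t)) l (nhds 3) := by
    have := tendsto_within_of_continuousAt (f := fun t : ℝ => Real.sqrt (5+4*t)) (by fun_prop)
    norm_num at this
    exact this
  -- c-limit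
  have Tsqc : Tendsto (fun t : ℝ => Real.sqrt (2*(1+t) /
      (Real.sqrt ((5+4*t)^3) * (Real.sqrt ((5+4*t)^3) + (11 + 14*t + 2*t^2))))) l
      (nhds (Real.sqrt 2 / 27)) := by
    have hc : ContinuousAt (fun t : ℝ => Real.sqrt (2*(1+t) /
        (Real.sqrt ((5+4*t)^3) * (Real.sqrt ((5+4*t)^3) + (11 + 14*t + 2*t^2))))) 1 := by
      apply Real.continuous_sqrt.continuousAt.comp
      apply ContinuousAt.div (by fun_prop) (by fun_prop)
      rw [show ((5+4*(1:ℝ))^3) = 27^2 by norm_num, Real.sqrt_sq (by norm_num)]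
      norm_num
    have := tendsto_within_of_continuousAt hc
    convert this using 2
    rw [show ((5+4*(1:ℝ))^3) = 27^2 by norm_num, Real.sqrt_sq (by norm_num)]
    rw [show 2*(1+(1:ℝ))/(27*(27+(11+14*(1:ℝ)+2*(1:ℝ)^2))) = (Real.sqrt 2/27)^2 by
      rw [div_pow, Real.sq_sqrt (by norm_num)]; norm_num]
    exact (Real.sqrt_sq (by positivity)).symm
  -- theta ratio limit
  have Thalf : Tendsto (fun t => th t / 2) l (nhdsWithin 0 {0}ᶜ) := by
    apply tendsto_nhdsWithin_of_tendsto_nhds_of_eventually_within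
    · simpa using Tth.div_const 2
    · filter_upwards [hthpos] with t ht
      simp only [Set.mem_compl_iff, Set.mem_singleton_iff]
      positivity
  have Tsc : Tendsto (fun t => (th t / 2) / Real.sin (th t / 2)) l (nhds 1) := by
    have := (sin_div_self_tendsto.comp Thalf).inv₀ one_ne_zero
    simpa [inv_div, Function.comp] using this
  have hratio : Tendsto (fun t => th t / Real.sqrt ((1-t)^3)) l (nhds (2*Real.sqrt 2/27)) := by
    have heq : (fun t => 2*((th t / 2) / Real.sin (th t / 2)) * Real.sqrt (2*(1+t) /
        (Real.sqrt ((5+4*t)^3) * (Real.sqrt ((5+4*t)^3) + (11 + 14*t + 2*t^2))))) =ᶠ[l]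
        (fun t => th t / Real.sqrt ((1-t)^3)) := by
      filter_upwards [hmem, hsinpos] with t ht hs
      have hS : (0:ℝ) < Real.sqrt ((1-t)^3) := Real.sqrt_pos.2 (pow_pos (by linarith [ht.2]) 3)
      have hsh : Real.sin (th t / 2) = Real.sqrt (2*(1+t) /
          (Real.sqrt ((5+4*t)^3) * (Real.sqrt ((5+4*t)^3) + (11 + 14*t + 2*t^2))))
        * Real.sqrt ((1-t)^3) := sinhalf t ht
      have hc0 : (0:ℝ) < Real.sqrt (2*(1+t) /
          (Real.sqrt ((5+4*t)^3) * (Real.sqrt ((5+4*t)^3) + (11 + 14*t + 2*t^2)))) := by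
        rcases (Real.sqrt_nonneg (2*(1+t) /
          (Real.sqrt ((5+4*t)^3) * (Real.sqrt ((5+4*t)^3) + (11 + 14*t + 2*t^2))))).lt_or_eq
          with h | h
        · exact h
        · exfalso; rw [hsh, ← h] at hs; simp at hs
      rw [hsh]
      generalize Real.sqrt (2*(1+t) / (Real.sqrt ((5+4*t)^3) * (Real.sqrt ((5+4*t)^3) + (11 + 14*t + 2*t^2)))) = c at hc0 ⊢
      field_simp
    refine Tendsto.congr' heq ?_
    have := ((Tsc.const_mul (2:ℝ)).mul Tsqc)
    convert this using 2
    ring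
  -- A limit
  have c1 : Tendsto (fun t : ℝ => Real.sqrt (1-t)) l (nhds 0) := by
    have := tendsto_within_of_continuousAt (f := fun t : ℝ => Real.sqrt (1-t)) (by fun_prop)
    simpa using this
  have c2 : Tendsto (fun t : ℝ => 7+2*t+3*Real.sqrt (5+4*t)) l (nhds 18) := by
    have h1 : Tendsto (fun t : ℝ => 7+2*t) l (nhds 9) := by
      have := tendsto_within_of_continuousAt (f := fun t : ℝ => 7+2*t) (by fun_prop)
      norm_num at this
      convert this using 2
    have := h1.add (Tr.const_mul 3)
    norm_num at this
    convert this using 2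
  have hA : Tendsto (fun t : ℝ => 4*Real.sqrt (1-t)/(7+2*t+3*Real.sqrt (5+4*t))) l (nhds 0) := by
    have := (c1.const_mul (4:ℝ)).div c2 (by norm_num)
    simpa [Pi.div_def] using this
  -- B limit
  have hB : Tendsto (fun t : ℝ =>
      3*Real.sqrt (5+4*t)*(1 - Real.cos (th t/3))/Real.sqrt ((1-t)^3)) l (nhds 0) := by
    apply squeeze_zero' (g := fun t => Real.sqrt (5+4*t)/6 *
        ((th t / Real.sqrt ((1-t)^3)) * (th t / Real.sqrt ((1-t)^3))) * Real.sqrt ((1-t)^3))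
    · filter_upwards [hmem] with t ht
      apply div_nonneg _ (Real.sqrt_nonneg _)
      have := Real.cos_le_one (th t/3)
      have := Real.sqrt_nonneg (5+4*t)
      nlinarith
    · filter_upwards [hmem] with t ht
      have hS : (0:ℝ) < Real.sqrt ((1-t)^3) := Real.sqrt_pos.2 (pow_pos (by linarith [ht.2]) 3)
      have hr : (0:ℝ) ≤ Real.sqrt (5+4*t) := Real.sqrt_nonneg _
      have hcosb := Real.one_sub_sq_div_two_le_cos (x := th t/3)
      have key : 3*Real.sqrt (5+4*t)*(1 - Real.cos (th t/3)) ≤ Real.sqrt (5+4*t)*(th t)^2/6 := by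
        nlinarith
      have : 3*Real.sqrt (5+4*t)*(1 - Real.cos (th t/3))/Real.sqrt ((1-t)^3)
          ≤ (Real.sqrt (5+4*t)*(th t)^2/6)/Real.sqrt ((1-t)^3) := by gcongr
      refine this.trans (le_of_eq ?_)
      field_simp
    · have := ((Tr.div_const 6).mul (hratio.mul hratio)).mul TS
      simpa using this
  -- C limit
  have Tphi : Tendsto (fun t => th t / 3) l (nhdsWithin 0 {0}ᶜ) := by
    apply tendsto_nhdsWithin_of_tendsto_nhds_of_eventually_within
    · simpa using Tth.div_const 3
    · filter_upwards [hthpos] with t ht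
      simp only [Set.mem_compl_iff, Set.mem_singleton_iff]
      positivity
  have Tss : Tendsto (fun t => Real.sin (th t/3) / (th t/3)) l (nhds 1) :=
    sin_div_self_tendsto.comp Tphi
  have hC : Tendsto (fun t : ℝ =>
      3*Real.sqrt 3*Real.sqrt (5+4*t)*Real.sin (th t/3)/Real.sqrt ((1-t)^3)) l
      (nhds (((2:ℝ)/3) ^ ((3:ℝ)/2))) := by
    have heq : (fun t => (3*Real.sqrt 3*Real.sqrt (5+4*t)) *
        (Real.sin (th t/3) / (th t/3)) * ((th t / Real.sqrt ((1-t)^3))/3)) =ᶠ[l]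
        (fun t : ℝ => 3*Real.sqrt 3*Real.sqrt (5+4*t)*Real.sin (th t/3)/Real.sqrt ((1-t)^3)) := by
      filter_upwards [hmem, hthpos] with t ht hpos
      have hS : (0:ℝ) < Real.sqrt ((1-t)^3) := Real.sqrt_pos.2 (pow_pos (by linarith [ht.2]) 3)
      field_simp
    refine Tendsto.congr' heq ?_
    have := ((Tr.const_mul (3*Real.sqrt 3)).mul Tss).mul (hratio.div_const 3)
    convert this using 2
    have s2 : Real.sqrt 2 ^ 2 = 2 := Real.sq_sqrt (by norm_num)
    have s3 : Real.sqrt 3 ^ 2 = 3 := Real.sq_sqrt (by norm_num)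
    rw [rpow_three_halves (by norm_num), show ((2:ℝ)/3)^3 = (8:ℝ)/27 by norm_num]
    rw [show (8:ℝ)/27 = (3*Real.sqrt 3*3*1*(2*Real.sqrt 2/27/3))^2 by
      ring_nf; nlinarith [s2, s3]]
    rw [Real.sqrt_sq (by positivity)]
  -- combine
  have heqf : (fun t : ℝ => 4*Real.sqrt (1-t)/(7+2*t+3*Real.sqrt (5+4*t))
      + 3*Real.sqrt (5+4*t)*(1 - Real.cos (th t/3))/Real.sqrt ((1-t)^3)
      + 3*Real.sqrt 3*Real.sqrt (5+4*t)*Real.sin (th t/3)/Real.sqrt ((1-t)^3)) =ᶠ[l]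
      (fun t : ℝ =>
        (7 + 2 * t - 6 * Real.sqrt (5 + 4 * t) *
          Real.cos (1 / 3 * Real.arccos ((11 + 14 * t + 2 * t ^ 2) /
            (5 + 4 * t) ^ ((3 : ℝ) / 2)) + Real.pi / 3)) / (1 - t) ^ ((3 : ℝ) / 2)) := by
    filter_upwards [hmem] with t ht
    rw [rpow_three_halves (show (0:ℝ) ≤ 1 - t by linarith [ht.2])]
    exact (decomp t (th t) ht).symm
  refine Tendsto.congr' heqf ?_
  have := (hA.add hB).add hC
  simpa using this
end

section
/- Let $b(t) = 2(1-t)$ and let $a : [0,1) \to (0,\infty)$ satisfy $a' = -\frac{6a}{2b - a}$ with $2b(t) - a(t) > 0$ and $a(0) = 1$. Then for all $t \in [0,1)$, the function $t \mapsto \frac{a(t)}{(1-t)^{3/2}}$ is nonincreasing, and consequently $a(t) \le (1-t)^{3/2}$. -/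
theorem a_ratio_antitone (b a : ℝ → ℝ) (hb : ∀ t, b t = 2 * (1 - t))
    (ha0 : a 0 = 1)
    (hpos : ∀ t ∈ Set.Ico (0 : ℝ) 1, 0 < a t)
    (hdenom : ∀ t ∈ Set.Ico (0 : ℝ) 1, 0 < 2 * b t - a t)
    (hderiv : ∀ t ∈ Set.Ico (0 : ℝ) 1,
      HasDerivAt a (-(6 * a t) / (2 * b t - a t)) t) :
    AntitoneOn (fun t => a t / (1 - t) ^ ((3 : ℝ) / 2)) (Set.Ico (0 : ℝ) 1) ∧
      ∀ t ∈ Set.Ico (0 : ℝ) 1, a t ≤ (1 - t) ^ ((3 : ℝ) / 2) := by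
  set f := fun t => a t / (1 - t) ^ ((3 : ℝ) / 2) with hf
  have key : ∀ t ∈ Set.Ico (0 : ℝ) 1, HasDerivAt f
      ((-(6 * a t) / (2 * b t - a t) * (1 - t) ^ ((3:ℝ)/2) -
        a t * (((3:ℝ)/2) * (1 - t) ^ ((3:ℝ)/2 - 1) * (0 - 1))) /
        ((1 - t) ^ ((3:ℝ)/2))^2) t := by
    intro t ht
    have h1 : (0:ℝ) < 1 - t := by linarith [ht.2]
    have hg : HasDerivAt (fun t : ℝ => (1 - t) ^ ((3:ℝ)/2))
        (((3:ℝ)/2) * (1 - t) ^ ((3:ℝ)/2 - 1) * (0 - 1)) t := by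
      have h := (Real.hasDerivAt_rpow_const (x := 1 - t) (p := (3:ℝ)/2)
        (Or.inl h1.ne')).comp t ((hasDerivAt_const t (1:ℝ)).sub (hasDerivAt_id t))
      simpa [mul_comm, Function.comp_def] using h
    exact (hderiv t ht).div hg (by positivity)
  have hderle : ∀ t ∈ Set.Ico (0 : ℝ) 1,
      (-(6 * a t) / (2 * b t - a t) * (1 - t) ^ ((3:ℝ)/2) -
        a t * (((3:ℝ)/2) * (1 - t) ^ ((3:ℝ)/2 - 1) * (0 - 1))) /
        ((1 - t) ^ ((3:ℝ)/2))^2 ≤ 0 := by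
    intro t ht
    have h1 : (0:ℝ) < 1 - t := by linarith [ht.2]
    have hD : 0 < 2 * b t - a t := hdenom t ht
    have ha : 0 < a t := hpos t ht
    have hu : (0:ℝ) < (1 - t) ^ ((1:ℝ)/2) := Real.rpow_pos_of_pos h1 _
    apply div_nonpos_of_nonpos_of_nonneg _ (sq_nonneg _)
    have hsplit : (1 - t) ^ ((3:ℝ)/2) = (1 - t) * (1 - t) ^ ((1:ℝ)/2) := by
      rw [← Real.rpow_one_add' h1.le (by norm_num)]
      norm_num
    have hexp : (3:ℝ)/2 - 1 = (1:ℝ)/2 := by norm_num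
    rw [hsplit, hexp]
    -- numerator = a t * (1-t)^{1/2} * (3/2 - 6(1-t)/D)
    have hfrac : (3:ℝ)/2 - 6 * (1 - t) / (2 * b t - a t) ≤ 0 := by
      rw [sub_nonpos, le_div_iff₀ hD, hb]
      nlinarith
    have : -(6 * a t) / (2 * b t - a t) * ((1 - t) * (1 - t) ^ ((1:ℝ)/2)) -
        a t * ((3:ℝ)/2 * (1 - t) ^ ((1:ℝ)/2) * (0 - 1)) =
        a t * (1 - t) ^ ((1:ℝ)/2) * ((3:ℝ)/2 - 6 * (1 - t) / (2 * b t - a t)) := by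
      field_simp
      ring
    rw [this]
    exact mul_nonpos_of_nonneg_of_nonpos (by positivity) hfrac
  have hanti : AntitoneOn f (Set.Ico (0 : ℝ) 1) := by
    apply antitoneOn_of_deriv_nonpos (convex_Ico _ _)
    · exact fun x hx => (key x hx).differentiableAt.continuousAt.continuousWithinAt
    · rw [interior_Ico]
      exact fun x hx => ((key x (Set.Ioo_subset_Ico_self hx)).differentiableAt).differentiableWithinAt
    · rw [interior_Ico]
      intro x hx
      rw [(key x (Set.Ioo_subset_Ico_self hx)).deriv]
      exact hderle x (Set.Ioo_subset_Ico_self hx)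
  refine ⟨hanti, fun t ht => ?_⟩
  have h1 : (0:ℝ) < 1 - t := by linarith [ht.2]
  have h0 : (0:ℝ) ∈ Set.Ico (0:ℝ) 1 := by constructor <;> norm_num
  have := hanti h0 ht ht.1
  have hf0 : f 0 = 1 := by simp [hf, ha0]
  rw [hf0] at this
  have hgpos : (0:ℝ) < (1 - t) ^ ((3:ℝ)/2) := Real.rpow_pos_of_pos h1 _
  calc a t = f t * (1 - t) ^ ((3:ℝ)/2) := by simp only [hf]; field_simp
    _ ≤ 1 * (1 - t) ^ ((3:ℝ)/2) := by apply mul_le_mul_of_nonneg_right this hgpos.le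
    _ = (1 - t) ^ ((3:ℝ)/2) := one_mul _
end

section
/- Define $b(t) = 2(1-t)$ and let $a : [0,1) \to (0,\infty)$ satisfy $a'(t) = -\frac{6a(t)}{2b(t) - a(t)}$ with $0 < a(t) \le (1-t)^{3/2}$. Define $\Phi(t) = \frac{9 a(t)^2}{(2b(t) - a(t))^2}$. Then $\frac{d}{dt}\left(\frac{\Phi(t)}{1-t}\right) = -\frac{9 a(t)^3 (8 b(t) - a(t))}{(1-t)^2 (2b(t) - a(t))^4} \le 0$, i.e., $\Phi(t)/(1-t)$ is nonincreasing on $[0,1)$. -/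
theorem phi_ratio_antitone (b a : ℝ → ℝ) (hb : ∀ t, b t = 2 * (1 - t))
    (hpos : ∀ t ∈ Set.Ico (0 : ℝ) 1, 0 < a t ∧ a t ≤ (1 - t) ^ ((3 : ℝ) / 2))
    (hderiv : ∀ t ∈ Set.Ico (0 : ℝ) 1,
      HasDerivAt a (-(6 * a t) / (2 * b t - a t)) t) :
    (∀ t ∈ Set.Ico (0 : ℝ) 1,
      HasDerivAt (fun s => (9 * (a s) ^ 2 / (2 * b s - a s) ^ 2) / (1 - s))
        (-(9 * (a t) ^ 3 * (8 * b t - a t)) / ((1 - t) ^ 2 * (2 * b t - a t) ^ 4)) t ∧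
      -(9 * (a t) ^ 3 * (8 * b t - a t)) / ((1 - t) ^ 2 * (2 * b t - a t) ^ 4) ≤ 0) ∧
    AntitoneOn (fun t => (9 * (a t) ^ 2 / (2 * b t - a t) ^ 2) / (1 - t))
      (Set.Ico (0 : ℝ) 1) := by
  obtain rfl : b = fun t => 2 * (1 - t) := funext hb
  -- basic facts at a point of Ico
  have key : ∀ t ∈ Set.Ico (0 : ℝ) 1,
      HasDerivAt (fun s => (9 * (a s) ^ 2 / (2 * (2 * (1 - s)) - a s) ^ 2) / (1 - s))
        (-(9 * (a t) ^ 3 * (8 * (2 * (1 - t)) - a t)) /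
          ((1 - t) ^ 2 * (2 * (2 * (1 - t)) - a t) ^ 4)) t ∧
      -(9 * (a t) ^ 3 * (8 * (2 * (1 - t)) - a t)) /
          ((1 - t) ^ 2 * (2 * (2 * (1 - t)) - a t) ^ 4) ≤ 0 := by
    intro t ht
    obtain ⟨hapos, hale⟩ := hpos t ht
    have ht1 : 0 < 1 - t := by simp [sub_pos]; exact ht.2
    have hle1 : (1 - t : ℝ) ^ ((3 : ℝ) / 2) ≤ 1 - t := by
      calc (1 - t : ℝ) ^ ((3 : ℝ) / 2) ≤ (1 - t) ^ (1 : ℝ) :=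
            Real.rpow_le_rpow_of_exponent_ge ht1 (by linarith [ht.1]) (by norm_num)
        _ = 1 - t := Real.rpow_one _
    have haD : a t < 4 * (1 - t) := lt_of_le_of_lt (hale.trans hle1) (by linarith)
    have hD : 0 < 2 * (2 * (1 - t)) - a t := by linarith
    have hDne : (2 * (2 * (1 - t)) - a t) ≠ 0 := ne_of_gt hD
    have hD2ne : (2 * (2 * (1 - t)) - a t) ^ 2 ≠ 0 := pow_ne_zero _ hDne
    have h1ne : (1 - t : ℝ) ≠ 0 := ne_of_gt ht1
    have ha' := hderiv t ht
    have h1 : HasDerivAt (fun s : ℝ => 1 - s) (-1) t := by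
      simpa using (hasDerivAt_id t).const_sub 1
    have hDdA : HasDerivAt (fun s => 2 * (2 * (1 - s)) - a s)
        (2 * (2 * (-1)) - (-(6 * a t) / (2 * (2 * (1 - t)) - a t))) t :=
      ((h1.const_mul 2).const_mul 2).sub ha'
    have hN : HasDerivAt (fun s => 9 * (a s) ^ 2)
        (9 * (2 * a t ^ 1 * (-(6 * a t) / (2 * (2 * (1 - t)) - a t)))) t := by
      simpa using (ha'.pow 2).const_mul 9
    have hQ := (hN.div (hDdA.pow 2) hD2ne).div h1 h1ne
    constructor
    · refine HasDerivAt.congr_deriv hQ ?_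
      simp only [Pi.div_apply, Pi.pow_apply, Nat.cast_ofNat, Nat.add_one_sub_one, pow_one]
      have hD4 : (2:ℝ) ^ 2 * (1 - t) - a t ≠ 0 := by
        rw [show (2:ℝ) ^ 2 * (1 - t) = 2 * (2 * (1 - t)) by ring]; exact hDne
      field_simp
      ring
    · apply div_nonpos_of_nonpos_of_nonneg
      · have h8 : 0 < 8 * (2 * (1 - t)) - a t := by linarith
        nlinarith [pow_pos hapos 3]
      · positivity
  refine ⟨key, ?_⟩
  have hcont : ContinuousOn (fun t => (9 * (a t) ^ 2 / (2 * (2 * (1 - t)) - a t) ^ 2) / (1 - t))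
      (Set.Ico (0 : ℝ) 1) := fun t ht =>
    ((key t ht).1.continuousAt).continuousWithinAt
  have hconv : Convex ℝ (Set.Ico (0 : ℝ) 1) := convex_Ico 0 1
  refine AntitoneOn.congr ?_ (fun t ht => rfl)
  apply antitoneOn_of_deriv_nonpos hconv hcont
  · intro t ht
    rw [interior_Ico] at ht
    exact ((key t (Set.Ioo_subset_Ico_self ht)).1).differentiableAt.differentiableWithinAt
  · intro t ht
    rw [interior_Ico] at ht
    have ht' := Set.Ioo_subset_Ico_self ht
    rw [((key t ht').1).deriv]
    exact (key t ht').2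
end

section
/- Let $(X_j)_{0 \le j \le m}$ be a supermartingale with increments satisfying $-C \le X_{j+1} - X_j \le c$ for all $j$, where $0 < c < C/10$. Then for any $0 < a < cm$: $\Pr[X_m - X_0 > a] \le \exp\left(-\frac{a^2}{3 c C m}\right)$. -/
open MeasureTheory

private lemma exp_le_quad {x : ℝ} (hx : |x| ≤ 1) :
    Real.exp x ≤ 1 + x + (3/4) * x ^ 2 := by
  have h := Real.exp_bound hx (by norm_num : (0:ℕ) < 2)
  have hs : ∑ i ∈ Finset.range 2, x ^ i / (Nat.factorial i) = 1 + x := by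
    simp [Finset.sum_range_succ]
  rw [hs] at h
  have h2 : |x| ^ 2 * ((Nat.succ 2 : ℕ) / ((Nat.factorial 2 : ℕ) * (2:ℕ) : ℝ))
      = (3/4) * x ^ 2 := by
    rw [sq_abs]; norm_num [Nat.factorial]; ring
  rw [h2] at h
  have := (abs_sub_le_iff.1 h).1
  linarith

theorem asymmetric_azuma {Ω : Type*} {m0 : MeasurableSpace Ω}
    {μ : Measure Ω} [IsProbabilityMeasure μ]
    (ℱ : Filtration ℕ m0) (X : ℕ → Ω → ℝ)
    (hX : Supermartingale X ℱ μ) (C c : ℝ) (hc : 0 < c) (hcC : c < C / 10)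
    (m : ℕ)
    (hinc : ∀ j, ∀ᵐ ω ∂μ, -C ≤ X (j + 1) ω - X j ω ∧ X (j + 1) ω - X j ω ≤ c)
    (a : ℝ) (ha : 0 < a) (ham : a < c * m) :
    μ {ω | X m ω - X 0 ω > a} ≤ ENNReal.ofReal (Real.exp (-a ^ 2 / (3 * c * C * m))) := by
  have hC : 0 < C := by linarith
  have hm0 : 0 < (m:ℝ) := by
    rcases (Nat.eq_zero_or_pos m) with h | h
    · subst h; norm_num at ham; linarith
    · exact_mod_cast h
  have hcC0 : 0 < c + C := by linarith
  set t : ℝ := 2*a/(3*c*C*m) with ht_def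
  have ht : 0 < t := by positivity
  set α : ℝ := (c * Real.exp (-(t*C)) + C * Real.exp (t*c)) / (c + C) with hα_def
  have hα_pos : 0 < α := by positivity
  clear_value t α
  have hmeas : ∀ n, StronglyMeasurable[ℱ n] (X n) := hX.1
  have hint : ∀ n, Integrable (X n) μ := hX.2.2
  -- a.e. upper bound on increments of the sum
  have hYub : ∀ n : ℕ, ∀ᵐ ω ∂μ, X n ω - X 0 ω ≤ c * n := by
    intro n
    induction n with
    | zero => filter_upwards with ω; simp
    | succ n ih =>
      filter_upwards [ih, hinc n] with ω h1 h2
      push_cast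
      linarith [h2.2]
  -- integrability helper
  have hintexp : ∀ (g : Ω → ℝ) (K : ℝ), StronglyMeasurable g →
      (∀ᵐ ω ∂μ, g ω ≤ K) → Integrable (fun ω => Real.exp (t * g ω)) μ := by
    intro g K hg hK
    refine Integrable.mono' (integrable_const (Real.exp (t*K))) ?_ ?_
    · exact (Real.continuous_exp.comp_stronglyMeasurable
        (hg.const_mul t)).aestronglyMeasurable
    · filter_upwards [hK] with ω h
      rw [Real.norm_eq_abs, Real.abs_exp]
      exact Real.exp_le_exp.2 (mul_le_mul_of_nonneg_left h ht.le)
  -- convexity bound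
  have key : ∀ x : ℝ, -C ≤ x → x ≤ c →
      Real.exp (t*x) ≤ α + (Real.exp (t*c) - Real.exp (-(t*C))) / (c + C) * x := by
    intro x h1 h2
    have hl1 : 0 ≤ (c - x)/(c+C) := div_nonneg (by linarith) hcC0.le
    have hl2 : 0 ≤ (x + C)/(c+C) := div_nonneg (by linarith) hcC0.le
    have hls : (c - x)/(c+C) + (x + C)/(c+C) = 1 := by field_simp; ring
    have h := convexOn_exp.2 (Set.mem_univ (-(t*C))) (Set.mem_univ (t*c)) hl1 hl2 hls
    have harg : ((c - x)/(c+C)) • (-(t*C)) + ((x + C)/(c+C)) • (t*c) = t*x := by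
      simp only [smul_eq_mul]
      field_simp [hcC0.ne']
      ring
    rw [harg] at h
    refine h.trans (le_of_eq ?_)
    simp only [smul_eq_mul, hα_def]
    field_simp [hcC0.ne']
    ring
  -- conditional expectation bound on one step
  have hcond : ∀ n : ℕ,
      μ[(fun ω => Real.exp (t * (X (n+1) ω - X n ω))) | ℱ n] ≤ᵐ[μ] fun _ => α := by
    intro n
    set β : ℝ := (Real.exp (t*c) - Real.exp (-(t*C))) / (c + C) with hβ_def
    have hβ : 0 ≤ β := by
      apply div_nonneg _ hcC0.le
      have : -(t*C) ≤ t*c := by nlinarith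
      linarith [Real.exp_le_exp.2 this]
    have hDint : Integrable (fun ω => X (n+1) ω - X n ω) μ := (hint (n+1)).sub (hint n)
    have hBint : Integrable (fun ω => Real.exp (t * (X (n+1) ω - X n ω))) μ := by
      refine hintexp _ c (((hmeas (n+1)).mono (ℱ.le (n+1))).sub ((hmeas n).mono (ℱ.le n))) ?_
      filter_upwards [hinc n] with ω h using h.2
    have hgint : Integrable (fun ω => α + β * (X (n+1) ω - X n ω)) μ :=
      (integrable_const α).add (hDint.const_mul β)
    have hle : (fun ω => Real.exp (t * (X (n+1) ω - X n ω)))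
        ≤ᵐ[μ] fun ω => α + β * (X (n+1) ω - X n ω) := by
      filter_upwards [hinc n] with ω h
      exact key _ h.1 h.2
    have h1 := condExp_mono (m := ℱ n) hBint hgint hle
    refine h1.trans ?_
    have e1 : (fun ω => α + β * (X (n+1) ω - X n ω))
        = (fun _ => α) + β • (X (n+1) - X n) := by
      funext ω; simp [smul_eq_mul]
    rw [e1]
    have hDint' : Integrable (X (n+1) - X n) μ := (hint (n+1)).sub (hint n)
    have hadd := condExp_add (μ := μ) (m := ℱ n) (integrable_const α) (hDint'.smul β)
    have h3 := condExp_smul (μ := μ) (m := ℱ n) β (X (n+1) - X n)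
    have h4 : μ[X (n+1) - X n | ℱ n] =ᵐ[μ] μ[X (n+1) | ℱ n] - μ[X n | ℱ n] :=
      condExp_sub (hint (n+1)) (hint n) _
    have h5 : μ[X n | ℱ n] = X n :=
      condExp_of_stronglyMeasurable (ℱ.le n) (hmeas n) (hint n)
    have h7 : μ[(fun _ => α : Ω → ℝ) | ℱ n] = fun _ => α := condExp_const (ℱ.le n) α
    have h6 := hX.2.1 n (n+1) (Nat.le_succ n)
    filter_upwards [hadd, h3, h4, h6] with ω e1' e3 e4 e6
    have e5 := congrFun h5 ω
    have e7 := congrFun h7 ω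
    simp only [Pi.add_apply, Pi.smul_apply, Pi.sub_apply, smul_eq_mul] at e1' e3 e4 e5 e7 ⊢
    rw [e1', e3, e4, e5, e7]
    nlinarith [hβ, e6]
  -- the mgf induction
  have hAmeas : ∀ n : ℕ, StronglyMeasurable[ℱ n] (fun ω => Real.exp (t * (X n ω - X 0 ω))) := by
    intro n
    exact Real.continuous_exp.comp_stronglyMeasurable
      (((hmeas n).sub ((hmeas 0).mono (ℱ.mono (Nat.zero_le n)))).const_mul t)
  have hAint : ∀ n : ℕ, Integrable (fun ω => Real.exp (t * (X n ω - X 0 ω))) μ := by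
    intro n
    exact hintexp _ (c * n) (((hmeas n).mono (ℱ.le n)).sub ((hmeas 0).mono (ℱ.le 0))) (hYub n)
  have main : ∀ n : ℕ, ∫ ω, Real.exp (t * (X n ω - X 0 ω)) ∂μ ≤ α ^ n := by
    intro n
    induction n with
    | zero => simp
    | succ n ih =>
      set A : Ω → ℝ := fun ω => Real.exp (t * (X n ω - X 0 ω)) with hA_def
      set B : Ω → ℝ := fun ω => Real.exp (t * (X (n+1) ω - X n ω)) with hB_def
      have hAB : (fun ω => Real.exp (t * (X (n+1) ω - X 0 ω))) = A * B := by
        funext ω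
        simp only [hA_def, hB_def, Pi.mul_apply, ← Real.exp_add]
        ring_nf
      have hABint : Integrable (A * B) μ := by rw [← hAB]; exact hAint (n+1)
      have hBint : Integrable B μ := by
        refine hintexp _ c (((hmeas (n+1)).mono (ℱ.le (n+1))).sub ((hmeas n).mono (ℱ.le n))) ?_
        filter_upwards [hinc n] with ω h using h.2
      rw [hAB, ← integral_condExp (ℱ.le n) (f := A * B)]
      have hmul := condExp_mul_of_stronglyMeasurable_left (hAmeas n) hABint hBint
      rw [integral_congr_ae hmul]
      have hstep : ∫ ω, (A * μ[B | ℱ n]) ω ∂μ ≤ ∫ ω, α * A ω ∂μ := by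
        refine integral_mono_of_nonneg ?_ ((hAint n).const_mul α) ?_
        · filter_upwards [condExp_nonneg (f := B) (m := ℱ n)
            (Filter.Eventually.of_forall fun ω => (Real.exp_pos _).le)] with ω hω
          exact mul_nonneg (Real.exp_pos _).le hω
        · filter_upwards [hcond n] with ω hω
          simp only [Pi.mul_apply]
          calc A ω * (μ[B | ℱ n]) ω ≤ A ω * α :=
                mul_le_mul_of_nonneg_left hω (Real.exp_pos _).le
            _ = α * A ω := mul_comm _ _
      refine hstep.trans ?_
      rw [integral_const_mul]
      calc α * ∫ ω, A ω ∂μ ≤ α * α ^ n := mul_le_mul_of_nonneg_left ih hα_pos.le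
        _ = α ^ (n+1) := (pow_succ' α n).symm
  -- Chernoff
  have hchern := ProbabilityTheory.measure_ge_le_exp_mul_mgf
    (X := fun ω => X m ω - X 0 ω) (μ := μ) a ht.le (hAint m)
  have hmgf : ProbabilityTheory.mgf (fun ω => X m ω - X 0 ω) μ t
      = ∫ ω, Real.exp (t * (X m ω - X 0 ω)) ∂μ := rfl
  rw [hmgf] at hchern
  -- numeric bound on α
  have htC : t * C ≤ 1 := by
    rw [ht_def, div_mul_eq_mul_div, div_le_one (by positivity)]
    nlinarith
  have htc : t * c ≤ 1 := by
    rw [ht_def, div_mul_eq_mul_div, div_le_one (by positivity)]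
    nlinarith
  have hE1 : Real.exp (-(t*C)) ≤ 1 - t*C + (3/4) * (t*C)^2 := by
    have := exp_le_quad (x := -(t*C)) (by rw [abs_neg, abs_of_nonneg (by positivity)]; exact htC)
    calc Real.exp (-(t*C)) ≤ 1 + (-(t*C)) + (3/4) * (-(t*C))^2 := this
      _ = 1 - t*C + (3/4) * (t*C)^2 := by ring
  have hE2 : Real.exp (t*c) ≤ 1 + t*c + (3/4) * (t*c)^2 :=
    exp_le_quad (x := t*c) (by rw [abs_of_nonneg (by positivity)]; exact htc)
  have hα_le : α ≤ Real.exp ((3/4) * t^2 * c * C) := by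
    have h1 : α ≤ 1 + (3/4) * t^2 * c * C := by
      rw [hα_def, div_le_iff₀ hcC0]
      nlinarith [mul_le_mul_of_nonneg_left hE1 hc.le, mul_le_mul_of_nonneg_left hE2 hC.le]
    refine h1.trans ?_
    linarith [Real.add_one_le_exp ((3/4) * t^2 * c * C)]
  have hαm : α ^ m ≤ Real.exp ((3/4) * t^2 * c * C * m) := by
    calc α ^ m ≤ (Real.exp ((3/4) * t^2 * c * C)) ^ m := pow_le_pow_left₀ hα_pos.le hα_le m
      _ = Real.exp ((3/4) * t^2 * c * C * m) := by
          rw [← Real.exp_nat_mul]; ring_nf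
  have hnum : Real.exp (-t * a) * (∫ ω, Real.exp (t * (X m ω - X 0 ω)) ∂μ)
      ≤ Real.exp (-a ^ 2 / (3 * c * C * m)) := by
    calc Real.exp (-t * a) * (∫ ω, Real.exp (t * (X m ω - X 0 ω)) ∂μ)
        ≤ Real.exp (-t * a) * α ^ m :=
          mul_le_mul_of_nonneg_left (main m) (Real.exp_pos _).le
      _ ≤ Real.exp (-t * a) * Real.exp ((3/4) * t^2 * c * C * m) :=
          mul_le_mul_of_nonneg_left hαm (Real.exp_pos _).le
      _ = Real.exp (-t * a + (3/4) * t^2 * c * C * m) := (Real.exp_add _ _).symm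
      _ = Real.exp (-a ^ 2 / (3 * c * C * m)) := by
          congr 1
          rw [ht_def]
          field_simp
          ring
  have hsub : {ω | X m ω - X 0 ω > a} ⊆ {ω | a ≤ X m ω - X 0 ω} := by
    intro ω hω
    simp only [Set.mem_setOf_eq] at hω ⊢
    exact le_of_lt hω
  calc μ {ω | X m ω - X 0 ω > a} ≤ μ {ω | a ≤ X m ω - X 0 ω} := measure_mono hsub
    _ = ENNReal.ofReal (μ {ω | a ≤ X m ω - X 0 ω}).toReal :=
        (ENNReal.ofReal_toReal (measure_ne_top μ _)).symm
    _ ≤ ENNReal.ofReal (Real.exp (-a ^ 2 / (3 * c * C * m))) :=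
        ENNReal.ofReal_le_ofReal (hchern.trans hnum)
end
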